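/- With H_{1,n} and H_{2,n} as above, for all n ≥ 2 the identity n·H_{2,n}(k) = (2k+1)·H_{2,n−1}(k) + (1/2)·(n·H_{1,n−1}(k) + (n−2)(2k+1)·H_{1,n−2}(k)) holds as polynomials in k. -/

import Mathlib

open PowerSeries

/-- `H_{1,n}(k) = ∑_{j=0}^{n} C(n,j) C(k+n-j, n)`. -/
def H1 (n k : ℕ) : ℕ := ∑ j ∈ Finset.range (n + 1), n.choose j * (k + n - j).choose n

lemma gf_choose_shift (p j : ℕ) (hj : j ≤ p) :
    (mk fun k => ((k + p - j).choose p : ℚ)) = X ^ j * mk fun k => ((p + k).choose p : ℚ) := by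
  ext k
  rw [coeff_mk, coeff_X_pow_mul']
  split_ifs with h
  · rw [coeff_mk]
    congr 2
    omega
  · rw [Nat.choose_eq_zero_of_lt (by omega)]
    norm_num

lemma gf_H1 (p : ℕ) :
    (mk fun k => (H1 p k : ℚ)) * (1 - X) ^ (p + 1) = (1 + X) ^ p := by
  have h1 : (mk fun k => (H1 p k : ℚ))
      = ∑ j ∈ Finset.range (p + 1), C (R := ℚ) ((p.choose j : ℚ)) *
          mk (fun k => ((k + p - j).choose p : ℚ)) := by
    ext k
    rw [coeff_mk, map_sum]
    simp only [coeff_C_mul, coeff_mk]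
    push_cast [H1]
    rfl
  rw [h1, Finset.sum_mul]
  have h2 : ∀ j ∈ Finset.range (p + 1),
      C (R := ℚ) ((p.choose j : ℚ)) * mk (fun k => ((k + p - j).choose p : ℚ)) * (1 - X) ^ (p + 1)
        = C (R := ℚ) ((p.choose j : ℚ)) * X ^ j := by
    intro j hj
    rw [gf_choose_shift p j (Nat.lt_succ_iff.mp (Finset.mem_range.mp hj)), mul_assoc, mul_assoc,
      mk_add_choose_mul_one_sub_pow_eq_one, mul_one]
  rw [Finset.sum_congr rfl h2, add_comm (1 : ℚ⟦X⟧) X, add_pow]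
  refine Finset.sum_congr rfl fun j _ => ?_
  rw [map_natCast, one_pow, mul_one, mul_comm]

lemma deriv_one_add_pow (m : ℕ) :
    (1 + X) * d⁄dX ℚ ((1 + X) ^ m) = C (R := ℚ) (m : ℚ) * (1 + X) ^ m := by
  induction m with
  | zero => simp
  | succ m ih =>
    rw [pow_succ, Derivation.leibniz]
    push_cast [map_add]
    simp only [smul_eq_mul, Derivation.map_one_eq_zero, derivative_X, map_one, mul_zero,
      zero_mul, add_zero, zero_add]
    linear_combination (1 + X) * ih

lemma deriv_rel (F P : ℚ⟦X⟧) (d : ℕ) (h : F * (1 - X) ^ (d + 1) = P) :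
    (d⁄dX ℚ F) * (1 - X) ^ (d + 2) = (1 - X) * d⁄dX ℚ P + C (R := ℚ) ((d : ℚ) + 1) * P := by
  have hd := congrArg (d⁄dX ℚ) h
  rw [Derivation.leibniz, Derivation.leibniz_pow] at hd
  simp only [smul_eq_mul, map_sub, Derivation.map_one_eq_zero, derivative_X, zero_sub,
    Nat.add_sub_cancel, nsmul_eq_mul] at hd
  have h2 : (d⁄dX ℚ F) * (1 - X) ^ (d + 2) =
      (1 - X) * d⁄dX ℚ P + ((d : ℚ⟦X⟧) + 1) * (F * (1 - X) ^ (d + 1)) := by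
    push_cast at hd
    rw [← hd]; ring
  rw [h2, h]
  congr 1
  rw [map_add, map_natCast, map_one]

lemma mk_T (f : ℕ → ℚ) :
    (mk fun k => (2 * (k : ℚ) + 1) * f k) = 2 * X * d⁄dX ℚ (mk f) + mk f := by
  ext k
  cases k with
  | zero => simp [coeff_mk, mul_comm, coeff_zero_X_mul]
  | succ k =>
    rw [coeff_mk, map_add, coeff_mk, mul_assoc, show (2:ℚ⟦X⟧) = C (R := ℚ) 2 from (map_ofNat _ 2).symm,
      coeff_C_mul, coeff_succ_X_mul, coeff_derivative, coeff_mk]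
    push_cast; ring

theorem H2n_relation_two (n : ℕ) (hn : 2 ≤ n) (H2 : ℕ → Polynomial ℚ)
    (hH2 : ∀ m : ℕ, 1 ≤ m →
      (PowerSeries.mk fun k => (H2 m).eval (k : ℚ)) * (1 - PowerSeries.X) ^ (m + 2)
        = (1 + PowerSeries.X) ^ (m - 1)
          * (1 + PowerSeries.C (R := ℚ) (2 * m) * PowerSeries.X + PowerSeries.X ^ 2)) :
    ∀ k : ℕ,
      (n : ℚ) * (H2 n).eval (k : ℚ)
        = (2 * k + 1) * (H2 (n - 1)).eval (k : ℚ)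
          + (1/2 : ℚ) * ((n : ℚ) * (H1 (n - 1) k : ℚ)
              + ((n : ℚ) - 2) * (2 * k + 1) * (H1 (n - 2) k : ℚ)) := by
  obtain ⟨m, rfl⟩ : ∃ m, n = m + 2 := ⟨n - 2, by omega⟩
  intro k
  have X1 : (1 - X : ℚ⟦X⟧) ≠ 0 := fun h => by simpa using congrArg (constantCoeff) h
  have X2 : (1 + X : ℚ⟦X⟧) ≠ 0 := fun h => by simpa using congrArg (constantCoeff) h
  -- normalized generating function hypotheses
  have ha : (mk fun j => (H2 (m + 2)).eval (j : ℚ)) * (1 - X) ^ (m + 4)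
      = (1 + X) ^ (m + 1) * (1 + C (R := ℚ) (2 * ((m : ℚ) + 2)) * X + X ^ 2) := by
    have h := hH2 (m + 2) (by omega)
    rw [show (2 * ((m + 2 : ℕ) : ℚ)) = 2 * ((m : ℚ) + 2) by push_cast; ring] at h
    exact h
  have hb : (mk fun j => (H2 (m + 1)).eval (j : ℚ)) * (1 - X) ^ (m + 3)
      = (1 + X) ^ m * (1 + C (R := ℚ) (2 * ((m : ℚ) + 1)) * X + X ^ 2) := by
    have h := hH2 (m + 1) (by omega)
    rw [show (2 * ((m + 1 : ℕ) : ℚ)) = 2 * ((m : ℚ) + 1) by push_cast; ring] at h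
    exact h
  have hdb := deriv_rel _ _ (m + 2) hb
  rw [show ((m + 2 : ℕ) : ℚ) + 1 = (m : ℚ) + 3 by push_cast; ring] at hdb
  have hG1 := gf_H1 (m + 1)
  have hG0 := gf_H1 m
  have hdG0 := deriv_rel _ _ m hG0
  have hA := deriv_one_add_pow m
  have hqb : (1 + X) * d⁄dX ℚ ((1 + X) ^ m * (1 + C (R := ℚ) (2 * ((m : ℚ) + 1)) * X + X ^ 2))
      = C (R := ℚ) (m : ℚ) * ((1 + X) ^ m * (1 + C (R := ℚ) (2 * ((m : ℚ) + 1)) * X + X ^ 2))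
        + (1 + X) ^ m * (1 + X) * (C (R := ℚ) (2 * ((m : ℚ) + 1)) + 2 * X) := by
    rw [Derivation.leibniz]
    have hq : d⁄dX ℚ (1 + C (R := ℚ) (2 * ((m : ℚ) + 1)) * X + X ^ 2)
        = C (R := ℚ) (2 * ((m : ℚ) + 1)) + 2 * X := by
      simp [Derivation.leibniz, sq, smul_eq_mul]
      ring
    rw [hq]
    simp only [smul_eq_mul]
    linear_combination (1 + C (R := ℚ) (2 * ((m : ℚ) + 1)) * X + X ^ 2) * hA
  have key : C (R := ℚ) 2 * (C (R := ℚ) ((m : ℚ) + 2) * mk fun j => (H2 (m + 2)).eval (j : ℚ))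
      = C (R := ℚ) 2 * (mk fun j => (2 * (j : ℚ) + 1) * (H2 (m + 1)).eval (j : ℚ))
        + (C (R := ℚ) ((m : ℚ) + 2) * (mk fun j => (H1 (m + 1) j : ℚ))
            + C (R := ℚ) (m : ℚ) * (mk fun j => (2 * (j : ℚ) + 1) * (H1 m j : ℚ))) := by
    rw [show (mk fun j => (2 * (j : ℚ) + 1) * (H2 (m + 1)).eval (j : ℚ))
          = 2 * X * d⁄dX ℚ (mk fun j => (H2 (m + 1)).eval (j : ℚ))
            + mk fun j => (H2 (m + 1)).eval (j : ℚ) from mk_T _,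
        show (mk fun j => (2 * (j : ℚ) + 1) * (H1 m j : ℚ))
          = 2 * X * d⁄dX ℚ (mk fun j => (H1 m j : ℚ)) + mk fun j => (H1 m j : ℚ) from mk_T _]
    apply mul_right_cancel₀ (b := (1 - X) ^ (m + 4) * (1 + X))
      (mul_ne_zero (pow_ne_zero _ X1) X2)
    simp only [map_add, map_mul, map_ofNat, map_one, map_natCast] at ha hb hdb hdG0 hA hqb ⊢
    linear_combination (2 * ((m : ℚ⟦X⟧) + 2) * (1 + X)) * ha
      - (4 * X * (1 + X)) * hdb
      - (2 * (1 - X) * (1 + X)) * hb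
      - (((m : ℚ⟦X⟧) + 2) * (1 - X) ^ 2 * (1 + X)) * hG1
      - (2 * (m : ℚ⟦X⟧) * X * (1 - X) ^ 2 * (1 + X)) * hdG0
      - ((m : ℚ⟦X⟧) * (1 - X) ^ 3 * (1 + X)) * hG0
      - (4 * X * (1 - X)) * hqb
      - (2 * (m : ℚ⟦X⟧) * X * (1 - X) ^ 3) * hA
  have key2 := congrArg (coeff k) key
  simp only [map_add, add_mul, coeff_C_mul, coeff_mk] at key2
  have e1 : m + 2 - 1 = m + 1 := rfl
  have e2 : m + 2 - 2 = m := rfl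
  rw [e1, e2]
  push_cast
  linear_combination (1/2 : ℚ) * key2
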